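/- Let X and Y be real Banach spaces, 1 ≤ p < ∞, and Z = X ⊕_p Y (the product X × Y with norm ‖(x,y)‖ = (‖x‖^p + ‖y‖^p)^{1/p}). Then Z has the Ball Dentable Property (BDP) if and only if X has BDP or Y has BDP. -/

import Mathlib

set_option maxHeartbeats 1000000


open Metric Topology Pointwise ENNReal

noncomputable section

/-- The slice `S(B_X, f, α) = {x ∈ B_X : f x > 1 - α}` of the closed unit ball of `X`
determined by the functional `f` and `α`. -/
def ballSlice (X : Type*) [NormedAddCommGroup X] [NormedSpace ℝ X]
    (f : X →L[ℝ] ℝ) (α : ℝ) : Set X :=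
  {x | x ∈ closedBall (0 : X) 1 ∧ 1 - α < f x}

/-- `X` has the Ball Dentable Property: the closed unit ball has slices (determined by
norm-one functionals) of arbitrarily small diameter. -/
def BDP (X : Type*) [NormedAddCommGroup X] [NormedSpace ℝ X] : Prop :=
  ∀ ε > (0 : ℝ), ∃ f : X →L[ℝ] ℝ, ‖f‖ = 1 ∧ ∃ α > (0 : ℝ), diam (ballSlice X f α) < ε

/-- The weak topology on `X`: the coarsest topology making all continuous linear
functionals continuous. -/
def weakTop (X : Type*) [NormedAddCommGroup X] [NormedSpace ℝ X] : TopologicalSpace X :=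
  ⨅ f : X →L[ℝ] ℝ, TopologicalSpace.induced f inferInstance

/-- `X` has the Ball Huskable Property: the closed unit ball has nonempty relatively
weakly open subsets of arbitrarily small diameter. -/
def BHP (X : Type*) [NormedAddCommGroup X] [NormedSpace ℝ X] : Prop :=
  ∀ ε > (0 : ℝ), ∃ V : Set X, IsOpen[weakTop X] V ∧
    (V ∩ closedBall (0 : X) 1).Nonempty ∧ diam (V ∩ closedBall (0 : X) 1) < ε

/-- `X` has the Ball Small Combination of Slices Property: there are finite convex
combinations of slices of the closed unit ball of arbitrarily small diameter. -/
def BSCSP (X : Type*) [NormedAddCommGroup X] [NormedSpace ℝ X] : Prop :=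
  ∀ ε > (0 : ℝ), ∃ (n : ℕ) (f : Fin n → X →L[ℝ] ℝ) (α lam : Fin n → ℝ),
    (∀ i, ‖f i‖ = 1) ∧ (∀ i, 0 < α i) ∧ (∀ i, 0 ≤ lam i) ∧ (∑ i, lam i = 1) ∧
    diam (∑ i, lam i • ballSlice X (f i) (α i)) < ε

/-- The weak* ballSlice `{g ∈ B_{E*} : g e > 1 - α}` of the closed unit ball of the dual of `E`
determined by `e : E` and `α`. -/
def wstarSlice (E : Type*) [NormedAddCommGroup E] [NormedSpace ℝ E]
    (e : E) (α : ℝ) : Set (E →L[ℝ] ℝ) :=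
  {g | g ∈ closedBall (0 : E →L[ℝ] ℝ) 1 ∧ 1 - α < g e}

/-- The dual of `E` has the w*-Ball Dentable Property: the closed unit ball of `E*` has
weak* slices (determined by norm-one elements of `E`) of arbitrarily small diameter. -/
def wstarBDP (E : Type*) [NormedAddCommGroup E] [NormedSpace ℝ E] : Prop :=
  ∀ ε > (0 : ℝ), ∃ e : E, ‖e‖ = 1 ∧ ∃ α > (0 : ℝ), diam (wstarSlice E e α) < ε

/-- The weak* topology `σ(E*, E)` on the dual of `E`. -/
def wstarTop (E : Type*) [NormedAddCommGroup E] [NormedSpace ℝ E] :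
    TopologicalSpace (E →L[ℝ] ℝ) :=
  ⨅ e : E, TopologicalSpace.induced (fun g : E →L[ℝ] ℝ => g e) inferInstance

/-- The dual of `E` has the w*-Ball Huskable Property: the closed unit ball of `E*` has
nonempty relatively weak*-open subsets of arbitrarily small diameter. -/
def wstarBHP (E : Type*) [NormedAddCommGroup E] [NormedSpace ℝ E] : Prop :=
  ∀ ε > (0 : ℝ), ∃ V : Set (E →L[ℝ] ℝ), IsOpen[wstarTop E] V ∧
    (V ∩ closedBall (0 : E →L[ℝ] ℝ) 1).Nonempty ∧
    diam (V ∩ closedBall (0 : E →L[ℝ] ℝ) 1) < ε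

/-- The dual of `E` has the w*-Ball Small Combination of Slices Property: there are finite
convex combinations of weak* slices of the closed unit ball of `E*` of arbitrarily small
diameter. -/
def wstarBSCSP (E : Type*) [NormedAddCommGroup E] [NormedSpace ℝ E] : Prop :=
  ∀ ε > (0 : ℝ), ∃ (n : ℕ) (e : Fin n → E) (α lam : Fin n → ℝ),
    (∀ i, ‖e i‖ = 1) ∧ (∀ i, 0 < α i) ∧ (∀ i, 0 ≤ lam i) ∧ (∑ i, lam i = 1) ∧
    diam (∑ i, lam i • wstarSlice E (e i) (α i)) < ε


section BDPhelpers

variable {X Y : Type*} [NormedAddCommGroup X] [NormedSpace ℝ X]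
    [NormedAddCommGroup Y] [NormedSpace ℝ Y] (p : ℝ≥0∞) [Fact (1 ≤ p)]

omit [NormedSpace ℝ X] [NormedSpace ℝ Y] in
lemma toRealpos (hp : p ≠ ∞) : 0 < p.toReal ∧ 1 ≤ p.toReal := by
  have h1 : (1:ℝ≥0∞) ≤ p := Fact.out
  have := ENNReal.toReal_mono hp h1
  simp at this
  exact ⟨lt_of_lt_of_le one_pos this, this⟩

omit [NormedSpace ℝ X] [NormedSpace ℝ Y] in
lemma fst_norm_le (hp : p ≠ ∞) (z : WithLp p (X × Y)) : ‖z.fst‖ ≤ ‖z‖ := by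
  obtain ⟨h0, h1⟩ := toRealpos p hp
  rw [WithLp.prod_norm_eq_add h0]
  calc ‖z.fst‖ = (‖z.fst‖ ^ p.toReal) ^ (1/p.toReal) := by
        rw [one_div, Real.rpow_rpow_inv (norm_nonneg _) h0.ne']
    _ ≤ (‖z.fst‖ ^ p.toReal + ‖z.snd‖ ^ p.toReal) ^ (1/p.toReal) := by
        apply Real.rpow_le_rpow (by positivity) _ (by positivity)
        nlinarith [Real.rpow_nonneg (norm_nonneg z.snd) p.toReal]

omit [NormedSpace ℝ X] [NormedSpace ℝ Y] in
lemma snd_norm_le (hp : p ≠ ∞) (z : WithLp p (X × Y)) : ‖z.snd‖ ≤ ‖z‖ := by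
  obtain ⟨h0, h1⟩ := toRealpos p hp
  rw [WithLp.prod_norm_eq_add h0]
  calc ‖z.snd‖ = (‖z.snd‖ ^ p.toReal) ^ (1/p.toReal) := by
        rw [one_div, Real.rpow_rpow_inv (norm_nonneg _) h0.ne']
    _ ≤ (‖z.fst‖ ^ p.toReal + ‖z.snd‖ ^ p.toReal) ^ (1/p.toReal) := by
        apply Real.rpow_le_rpow (by positivity) _ (by positivity)
        nlinarith [Real.rpow_nonneg (norm_nonneg z.fst) p.toReal]

def inlZ : X →L[ℝ] WithLp p (X × Y) :=
  ((WithLp.prodContinuousLinearEquiv p ℝ X Y).symm : (X × Y) →L[ℝ] WithLp p (X × Y)).comp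
    (ContinuousLinearMap.inl ℝ X Y)

def inrZ : Y →L[ℝ] WithLp p (X × Y) :=
  ((WithLp.prodContinuousLinearEquiv p ℝ X Y).symm : (X × Y) →L[ℝ] WithLp p (X × Y)).comp
    (ContinuousLinearMap.inr ℝ X Y)

def fstZ : WithLp p (X × Y) →L[ℝ] X :=
  (ContinuousLinearMap.fst ℝ X Y).comp
    ((WithLp.prodContinuousLinearEquiv p ℝ X Y) : WithLp p (X × Y) →L[ℝ] (X × Y))

def sndZ : WithLp p (X × Y) →L[ℝ] Y :=
  (ContinuousLinearMap.snd ℝ X Y).comp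
    ((WithLp.prodContinuousLinearEquiv p ℝ X Y) : WithLp p (X × Y) →L[ℝ] (X × Y))

lemma inlZ_norm (x : X) : ‖inlZ (Y := Y) p x‖ = ‖x‖ := WithLp.norm_toLp_fst p X Y x
lemma inrZ_norm (y : Y) : ‖inrZ (X := X) p y‖ = ‖y‖ := WithLp.norm_toLp_snd p X Y y

lemma inlZ_norm_le : ‖(inlZ p : X →L[ℝ] WithLp p (X × Y))‖ ≤ 1 :=
  ContinuousLinearMap.opNorm_le_bound _ zero_le_one (fun x => by rw [inlZ_norm, one_mul])

lemma inrZ_norm_le : ‖(inrZ p : Y →L[ℝ] WithLp p (X × Y))‖ ≤ 1 :=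
  ContinuousLinearMap.opNorm_le_bound _ zero_le_one (fun y => by rw [inrZ_norm, one_mul])

lemma z_decomp (z : WithLp p (X × Y)) : inlZ p z.fst + inrZ p z.snd = z := by
  apply (WithLp.equiv p (X × Y)).injective
  ext <;> simp [inlZ, inrZ]

@[simp] lemma inlZ_fst (x : X) : (inlZ (Y := Y) p x).fst = x := rfl
@[simp] lemma inlZ_snd (x : X) : (inlZ (Y := Y) p x).snd = 0 := rfl
@[simp] lemma inrZ_fst (y : Y) : (inrZ (X := X) p y).fst = 0 := rfl
@[simp] lemma inrZ_snd (y : Y) : (inrZ (X := X) p y).snd = y := rfl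

lemma dist_comp_le (z w : WithLp p (X × Y)) :
    dist z w ≤ dist z.fst w.fst + dist z.snd w.snd := by
  have h : z - w = inlZ p (z.fst - w.fst) + inrZ p (z.snd - w.snd) := by
    apply (WithLp.equiv p (X × Y)).injective
    ext <;> simp [inlZ, inrZ]
  rw [dist_eq_norm, h, dist_eq_norm, dist_eq_norm]
  exact (norm_add_le _ _).trans (by rw [inlZ_norm, inrZ_norm])

/-- Monotonicity of the `ℓ^p`-norm in the first component. -/
lemma mono_left (hp : p ≠ ∞) (z : WithLp p (X × Y)) (hz : ‖z‖ ≤ 1)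
    (x : X) (hx : ‖x‖ ≤ 1) : ‖inlZ p (‖z.fst‖ • x) + inrZ p z.snd‖ ≤ 1 := by
  obtain ⟨hpr0, hpr1⟩ := toRealpos p hp
  have hfst : (inlZ p (‖z.fst‖ • x) + inrZ p z.snd).fst = ‖z.fst‖ • x := by
    simp [WithLp.add_fst]
  have hsnd : (inlZ p (‖z.fst‖ • x) + inrZ p z.snd).snd = z.snd := by
    simp [WithLp.add_snd]
  have hnx : ‖(‖z.fst‖ • x)‖ ≤ ‖z.fst‖ := by
    rw [norm_smul, Real.norm_eq_abs, abs_of_nonneg (norm_nonneg _)]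
    nlinarith [norm_nonneg z.fst]
  rw [WithLp.prod_norm_eq_add hpr0, hfst, hsnd]
  calc (‖(‖z.fst‖ • x)‖ ^ p.toReal + ‖z.snd‖ ^ p.toReal) ^ (1/p.toReal)
      ≤ (‖z.fst‖ ^ p.toReal + ‖z.snd‖ ^ p.toReal) ^ (1/p.toReal) := by
        apply Real.rpow_le_rpow (by positivity) _ (by positivity)
        exact add_le_add_left (Real.rpow_le_rpow (norm_nonneg _) hnx hpr0.le) _
    _ = ‖z‖ := (WithLp.prod_norm_eq_add hpr0 z).symm
    _ ≤ 1 := hz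

/-- Monotonicity of the `ℓ^p`-norm in the second component. -/
lemma mono_right (hp : p ≠ ∞) (z : WithLp p (X × Y)) (hz : ‖z‖ ≤ 1)
    (y : Y) (hy : ‖y‖ ≤ 1) : ‖inrZ p (‖z.snd‖ • y) + inlZ p z.fst‖ ≤ 1 := by
  obtain ⟨hpr0, hpr1⟩ := toRealpos p hp
  have hfst : (inrZ p (‖z.snd‖ • y) + inlZ p z.fst).fst = z.fst := by
    simp [WithLp.add_fst]
  have hsnd : (inrZ p (‖z.snd‖ • y) + inlZ p z.fst).snd = ‖z.snd‖ • y := by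
    simp [WithLp.add_snd]
  have hny : ‖(‖z.snd‖ • y)‖ ≤ ‖z.snd‖ := by
    rw [norm_smul, Real.norm_eq_abs, abs_of_nonneg (norm_nonneg _)]
    nlinarith [norm_nonneg z.snd]
  rw [WithLp.prod_norm_eq_add hpr0, hfst, hsnd]
  calc (‖z.fst‖ ^ p.toReal + ‖(‖z.snd‖ • y)‖ ^ p.toReal) ^ (1/p.toReal)
      ≤ (‖z.fst‖ ^ p.toReal + ‖z.snd‖ ^ p.toReal) ^ (1/p.toReal) := by
        apply Real.rpow_le_rpow (by positivity) _ (by positivity)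
        exact add_le_add_right (Real.rpow_le_rpow (norm_nonneg _) hny hpr0.le) _
    _ = ‖z‖ := (WithLp.prod_norm_eq_add hpr0 z).symm
    _ ≤ 1 := hz

end BDPhelpers

section BDPeasy
variable {X Y : Type*} [NormedAddCommGroup X] [NormedSpace ℝ X]
    [NormedAddCommGroup Y] [NormedSpace ℝ Y] (p : ℝ≥0∞) [Fact (1 ≤ p)]

lemma bdp_left (hp : p ≠ ∞) (hX : BDP X) : BDP (WithLp p (X × Y)) := by
  intro ε hε
  obtain ⟨f, hf, α₀, hα₀, hdiam⟩ := hX (ε/2) (by linarith)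
  obtain ⟨hpr0, hpr1⟩ := toRealpos p hp
  set pr := p.toReal with hprdef
  have hεp : (0:ℝ) < (ε/8) ^ pr := Real.rpow_pos_of_pos (by linarith) pr
  set α : ℝ := min α₀ (min 1 ((ε/8)^pr / pr)) with hαdef
  have hαpos : 0 < α := lt_min hα₀ (lt_min one_pos (by positivity))
  have hα1 : α ≤ 1 := (min_le_right _ _).trans (min_le_left _ _)
  have hαε : α ≤ (ε/8)^pr / pr := (min_le_right _ _).trans (min_le_right _ _)
  set F : WithLp p (X × Y) →L[ℝ] ℝ := f.comp (fstZ p) with hF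
  refine ⟨F, ?_, α, hαpos, ?_⟩
  · apply le_antisymm
    · apply ContinuousLinearMap.opNorm_le_bound _ zero_le_one
      intro z
      have : ‖f z.fst‖ ≤ ‖f‖ * ‖z.fst‖ := f.le_opNorm _
      calc ‖F z‖ = ‖f z.fst‖ := rfl
        _ ≤ ‖f‖ * ‖z.fst‖ := f.le_opNorm _
        _ = ‖z.fst‖ := by rw [hf, one_mul]
        _ ≤ ‖z‖ := fst_norm_le p hp z
        _ = 1 * ‖z‖ := (one_mul _).symm
    · have hcomp : F.comp (inlZ p) = f := by ext x; rfl
      calc (1:ℝ) = ‖f‖ := hf.symm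
        _ = ‖F.comp (inlZ p)‖ := by rw [hcomp]
        _ ≤ ‖F‖ * ‖(inlZ p : X →L[ℝ] WithLp p (X × Y))‖ :=
            ContinuousLinearMap.opNorm_comp_le _ _
        _ ≤ ‖F‖ * 1 := by
            have := inlZ_norm_le (X := X) (Y := Y) p
            nlinarith [norm_nonneg (F)]
        _ = ‖F‖ := mul_one _
  · -- diameter bound
    have hXb : Bornology.IsBounded (ballSlice X f α₀) :=
      (isBounded_closedBall).subset (fun x hx => hx.1)
    -- key per-element facts
    have key : ∀ z ∈ ballSlice (WithLp p (X × Y)) (F) α,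
        z.fst ∈ ballSlice X f α₀ ∧ ‖z.snd‖ ≤ ε/8 := by
      rintro z ⟨hz1, hz2⟩
      rw [mem_closedBall_zero_iff] at hz1
      have hzval : 1 - α < f z.fst := hz2
      have hfst1 : ‖z.fst‖ ≤ 1 := (fst_norm_le p hp z).trans hz1
      have hfz : f z.fst ≤ ‖z.fst‖ := by
        calc f z.fst ≤ ‖f z.fst‖ := le_abs_self _
          _ ≤ ‖f‖ * ‖z.fst‖ := f.le_opNorm _
          _ = ‖z.fst‖ := by rw [hf, one_mul]
      constructor
      · exact ⟨mem_closedBall_zero_iff.mpr hfst1, lt_of_le_of_lt (by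
          have : α ≤ α₀ := min_le_left _ _
          linarith) hzval⟩
      · -- snd small
        have h1 : 1 - α ≤ ‖z.fst‖ := by linarith
        have hA : (1-α)^pr ≤ ‖z.fst‖^pr :=
          Real.rpow_le_rpow (by linarith) h1 hpr0.le
        have hsum : ‖z.fst‖^pr + ‖z.snd‖^pr ≤ 1 := by
          have hnf := WithLp.prod_norm_eq_add (p := p) hpr0 z
          have h2 : (‖z.fst‖^pr + ‖z.snd‖^pr) ^ (1/pr) ≤ 1 := by
            rw [← hnf]; exact hz1
          calc ‖z.fst‖^pr + ‖z.snd‖^pr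
              = ((‖z.fst‖^pr + ‖z.snd‖^pr) ^ (1/pr)) ^ pr := by
                rw [one_div, Real.rpow_inv_rpow (by positivity) hpr0.ne']
            _ ≤ 1 ^ pr := Real.rpow_le_rpow (by positivity) h2 hpr0.le
            _ = 1 := Real.one_rpow _
        have hbern : 1 - pr * α ≤ (1-α)^pr := by
          have := one_add_mul_self_le_rpow_one_add (s := -α) (by linarith) hpr1
          simpa [sub_eq_add_neg, mul_comm] using this
        have h2 : ‖z.snd‖^pr ≤ pr * α := by linarith
        have h3 : pr * α ≤ (ε/8)^pr := by
          calc pr * α ≤ pr * ((ε/8)^pr / pr) := mul_le_mul_of_nonneg_left hαε hpr0.le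
            _ = (ε/8)^pr := by field_simp
        calc ‖z.snd‖ = (‖z.snd‖^pr) ^ (1/pr) := by
              rw [one_div, Real.rpow_rpow_inv (norm_nonneg _) hpr0.ne']
          _ ≤ ((ε/8)^pr) ^ (1/pr) := Real.rpow_le_rpow (by positivity) (h2.trans h3) (by positivity)
          _ = ε/8 := by rw [one_div, Real.rpow_rpow_inv (by linarith) hpr0.ne']
    have hb : ∀ z ∈ ballSlice (WithLp p (X × Y)) (F) α,
        ∀ w ∈ ballSlice (WithLp p (X × Y)) (F) α,
        dist z w ≤ diam (ballSlice X f α₀) + ε/4 := by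
      intro z hz w hw
      obtain ⟨hz1, hz2⟩ := key z hz
      obtain ⟨hw1, hw2⟩ := key w hw
      calc dist z w ≤ dist z.fst w.fst + dist z.snd w.snd := dist_comp_le p z w
        _ ≤ diam (ballSlice X f α₀) + (‖z.snd‖ + ‖w.snd‖) := by
            gcongr
            · exact dist_le_diam_of_mem hXb hz1 hw1
            · exact dist_le_norm_add_norm _ _
        _ ≤ diam (ballSlice X f α₀) + ε/4 := by linarith
    have := diam_le_of_forall_dist_le (by positivity) hb
    calc diam (ballSlice (WithLp p (X × Y)) (F) α)
        ≤ diam (ballSlice X f α₀) + ε/4 := this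
      _ < ε/2 + ε/4 := by linarith
      _ < ε := by linarith
lemma bdp_right (hp : p ≠ ∞) (hY : BDP Y) : BDP (WithLp p (X × Y)) := by
  intro ε hε
  obtain ⟨f, hf, α₀, hα₀, hdiam⟩ := hY (ε/2) (by linarith)
  obtain ⟨hpr0, hpr1⟩ := toRealpos p hp
  set pr := p.toReal with hprdef
  have hεp : (0:ℝ) < (ε/8) ^ pr := Real.rpow_pos_of_pos (by linarith) pr
  set α : ℝ := min α₀ (min 1 ((ε/8)^pr / pr)) with hαdef
  have hαpos : 0 < α := lt_min hα₀ (lt_min one_pos (by positivity))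
  have hα1 : α ≤ 1 := (min_le_right _ _).trans (min_le_left _ _)
  have hαε : α ≤ (ε/8)^pr / pr := (min_le_right _ _).trans (min_le_right _ _)
  set F : WithLp p (X × Y) →L[ℝ] ℝ := f.comp (sndZ p) with hF
  refine ⟨F, ?_, α, hαpos, ?_⟩
  · apply le_antisymm
    · apply ContinuousLinearMap.opNorm_le_bound _ zero_le_one
      intro z
      have : ‖f z.snd‖ ≤ ‖f‖ * ‖z.snd‖ := f.le_opNorm _
      calc ‖F z‖ = ‖f z.snd‖ := rfl
        _ ≤ ‖f‖ * ‖z.snd‖ := f.le_opNorm _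
        _ = ‖z.snd‖ := by rw [hf, one_mul]
        _ ≤ ‖z‖ := snd_norm_le p hp z
        _ = 1 * ‖z‖ := (one_mul _).symm
    · have hcomp : F.comp (inrZ p) = f := by ext x; rfl
      calc (1:ℝ) = ‖f‖ := hf.symm
        _ = ‖F.comp (inrZ p)‖ := by rw [hcomp]
        _ ≤ ‖F‖ * ‖(inrZ p : Y →L[ℝ] WithLp p (X × Y))‖ :=
            ContinuousLinearMap.opNorm_comp_le _ _
        _ ≤ ‖F‖ * 1 := by
            have := inrZ_norm_le (X := X) (Y := Y) p
            nlinarith [norm_nonneg (F)]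
        _ = ‖F‖ := mul_one _
  · -- diameter bound
    have hYb : Bornology.IsBounded (ballSlice Y f α₀) :=
      (isBounded_closedBall).subset (fun x hx => hx.1)
    -- key per-element facts
    have key : ∀ z ∈ ballSlice (WithLp p (X × Y)) (F) α,
        z.snd ∈ ballSlice Y f α₀ ∧ ‖z.fst‖ ≤ ε/8 := by
      rintro z ⟨hz1, hz2⟩
      rw [mem_closedBall_zero_iff] at hz1
      have hzval : 1 - α < f z.snd := hz2
      have hfst1 : ‖z.snd‖ ≤ 1 := (snd_norm_le p hp z).trans hz1
      have hfz : f z.snd ≤ ‖z.snd‖ := by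
        calc f z.snd ≤ ‖f z.snd‖ := le_abs_self _
          _ ≤ ‖f‖ * ‖z.snd‖ := f.le_opNorm _
          _ = ‖z.snd‖ := by rw [hf, one_mul]
      constructor
      · exact ⟨mem_closedBall_zero_iff.mpr hfst1, lt_of_le_of_lt (by
          have : α ≤ α₀ := min_le_left _ _
          linarith) hzval⟩
      · -- snd small
        have h1 : 1 - α ≤ ‖z.snd‖ := by linarith
        have hA : (1-α)^pr ≤ ‖z.snd‖^pr :=
          Real.rpow_le_rpow (by linarith) h1 hpr0.le
        have hsum : ‖z.fst‖^pr + ‖z.snd‖^pr ≤ 1 := by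
          have hnf := WithLp.prod_norm_eq_add (p := p) hpr0 z
          have h2 : (‖z.fst‖^pr + ‖z.snd‖^pr) ^ (1/pr) ≤ 1 := by
            rw [← hnf]; exact hz1
          calc ‖z.fst‖^pr + ‖z.snd‖^pr
              = ((‖z.fst‖^pr + ‖z.snd‖^pr) ^ (1/pr)) ^ pr := by
                rw [one_div, Real.rpow_inv_rpow (by positivity) hpr0.ne']
            _ ≤ 1 ^ pr := Real.rpow_le_rpow (by positivity) h2 hpr0.le
            _ = 1 := Real.one_rpow _
        have hbern : 1 - pr * α ≤ (1-α)^pr := by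
          have := one_add_mul_self_le_rpow_one_add (s := -α) (by linarith) hpr1
          simpa [sub_eq_add_neg, mul_comm] using this
        have h2 : ‖z.fst‖^pr ≤ pr * α := by linarith
        have h3 : pr * α ≤ (ε/8)^pr := by
          calc pr * α ≤ pr * ((ε/8)^pr / pr) := mul_le_mul_of_nonneg_left hαε hpr0.le
            _ = (ε/8)^pr := by field_simp
        calc ‖z.fst‖ = (‖z.fst‖^pr) ^ (1/pr) := by
              rw [one_div, Real.rpow_rpow_inv (norm_nonneg _) hpr0.ne']
          _ ≤ ((ε/8)^pr) ^ (1/pr) := Real.rpow_le_rpow (by positivity) (h2.trans h3) (by positivity)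
          _ = ε/8 := by rw [one_div, Real.rpow_rpow_inv (by linarith) hpr0.ne']
    have hb : ∀ z ∈ ballSlice (WithLp p (X × Y)) (F) α,
        ∀ w ∈ ballSlice (WithLp p (X × Y)) (F) α,
        dist z w ≤ diam (ballSlice Y f α₀) + ε/4 := by
      intro z hz w hw
      obtain ⟨hz1, hz2⟩ := key z hz
      obtain ⟨hw1, hw2⟩ := key w hw
      calc dist z w ≤ dist z.fst w.fst + dist z.snd w.snd := dist_comp_le p z w
        _ ≤ (‖z.fst‖ + ‖w.fst‖) + diam (ballSlice Y f α₀) := by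
            gcongr
            · exact dist_le_norm_add_norm _ _
            · exact dist_le_diam_of_mem hYb hz1 hw1
        _ ≤ diam (ballSlice Y f α₀) + ε/4 := by linarith
    have := diam_le_of_forall_dist_le (by positivity) hb
    calc diam (ballSlice (WithLp p (X × Y)) (F) α)
        ≤ diam (ballSlice Y f α₀) + ε/4 := this
      _ < ε/2 + ε/4 := by linarith
      _ < ε := by linarith

end BDPeasy

/-- A norm-one functional has elements of the unit ball with value close to `1`. -/
lemma exists_slice_elt {Z : Type*} [NormedAddCommGroup Z] [NormedSpace ℝ Z]
    (F : Z →L[ℝ] ℝ) (hF : ‖F‖ = 1) {c : ℝ} (hc0 : 0 ≤ c) (hc1 : c < 1) :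
    ∃ z : Z, ‖z‖ ≤ 1 ∧ c < F z := by
  by_contra hcon
  push_neg at hcon
  have habs : ∀ z : Z, ‖F z‖ ≤ c * ‖z‖ := by
    intro z
    rcases eq_or_ne z 0 with rfl | hz0
    · simp
    · have hnz : 0 < ‖z‖ := norm_pos_iff.mpr hz0
      have hinv : ‖z‖⁻¹ * ‖z‖ = 1 := inv_mul_cancel₀ hnz.ne'
      have hu : ‖(‖z‖⁻¹ • z)‖ = 1 := by
        rw [norm_smul, Real.norm_eq_abs, abs_of_pos (by positivity)]; exact hinv
      have h1 : F (‖z‖⁻¹ • z) ≤ c := hcon _ hu.le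
      have h2 : F (-(‖z‖⁻¹ • z)) ≤ c := hcon _ (by rw [norm_neg, hu])
      rw [map_neg] at h2
      rw [map_smul, smul_eq_mul] at h1 h2
      rw [Real.norm_eq_abs, abs_le]
      have e1 : ‖z‖ * (‖z‖⁻¹ * F z) = F z := by field_simp
      have e2 : ‖z‖ * (-(‖z‖⁻¹ * F z)) = -F z := by rw [mul_neg, e1]
      have h1' := mul_le_mul_of_nonneg_left h1 hnz.le
      have h2' := mul_le_mul_of_nonneg_left h2 hnz.le
      rw [e1] at h1'
      rw [e2] at h2'
      constructor <;> nlinarith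
  have := F.opNorm_le_bound hc0 habs
  rw [hF] at this
  linarith

/-- Abstract one-summand slice extraction: if one summand carries most of the functional,
the slice of the summand's ball is small. -/
lemma slice_case {E Z : Type*} [NormedAddCommGroup E] [NormedSpace ℝ E]
    [NormedAddCommGroup Z] [NormedSpace ℝ Z]
    (F : Z →L[ℝ] ℝ) (hFle : ‖F‖ ≤ 1) {α : ℝ} (hα : 0 < α) (hα12 : α ≤ 1/2)
    (hZb : Bornology.IsBounded (ballSlice Z F α))
    (J : E →L[ℝ] Z) (hJ : ∀ e : E, ‖J e‖ = ‖e‖)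
    (u : E) (r : Z) (hu1 : ‖u‖ ≤ 1)
    (hval : 1 - α/2 < F (J u) + F r)
    (hcase : F r ≤ F (J u))
    (hmono : ∀ x : E, ‖x‖ ≤ 1 → ‖J (‖u‖ • x) + r‖ ≤ 1) :
    ∃ h : E →L[ℝ] ℝ, ‖h‖ = 1 ∧ ∃ β > (0:ℝ),
      diam (ballSlice E h β) ≤ (8/3) * diam (ballSlice Z F α) := by
  have fapp : ∀ e : E, (F.comp J) e = F (J e) := fun e => rfl
  have hfle : ‖F.comp J‖ ≤ 1 := by
    apply ContinuousLinearMap.opNorm_le_bound _ zero_le_one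
    intro e
    calc ‖(F.comp J) e‖ = ‖F (J e)‖ := rfl
      _ ≤ ‖F‖ * ‖J e‖ := F.le_opNorm _
      _ = ‖F‖ * ‖e‖ := by rw [hJ]
      _ ≤ 1 * ‖e‖ := mul_le_mul_of_nonneg_right hFle (norm_nonneg _)
  have hfu : (F.comp J) u ≤ ‖F.comp J‖ * ‖u‖ := (le_abs_self _).trans ((F.comp J).le_opNorm _)
  have hc : 3/8 < (F.comp J) u := by rw [fapp]; linarith
  have hfu1 : (F.comp J) u ≤ 1 := by nlinarith [norm_nonneg u, norm_nonneg (F.comp J)]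
  have htf : (F.comp J) u ≤ ‖u‖ := by nlinarith [norm_nonneg u, norm_nonneg (F.comp J)]
  have ht : 3/8 < ‖u‖ := lt_of_lt_of_le hc htf
  have htpos : (0:ℝ) < ‖u‖ := by linarith
  have hfpos : 0 < ‖F.comp J‖ := by nlinarith [norm_nonneg (F.comp J)]
  have hhnorm : ‖(‖F.comp J‖⁻¹ • F.comp J : E →L[ℝ] ℝ)‖ = 1 := by
    have e := norm_smul (‖F.comp J‖⁻¹) (F.comp J)
    rw [e, Real.norm_eq_abs, abs_of_pos (inv_pos.mpr hfpos), inv_mul_cancel₀ hfpos.ne']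
  refine ⟨‖F.comp J‖⁻¹ • F.comp J, hhnorm, min (α/2) (1/2),
    lt_min (by linarith) (by norm_num), ?_⟩
  have hβα : min (α/2) (1/2) ≤ α/2 := min_le_left _ _
  have hβ12 : min (α/2) (1/2) ≤ 1/2 := min_le_right _ _
  have hβpos : 0 < min (α/2) (1/2) := lt_min (by linarith) (by norm_num)
  have hmem : ∀ x ∈ ballSlice E (‖F.comp J‖⁻¹ • F.comp J) (min (α/2) (1/2)),
      (J (‖u‖ • x) + r) ∈ ballSlice Z F α := by
    rintro x ⟨hx1, hx2⟩
    rw [mem_closedBall_zero_iff] at hx1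
    have hx2' : 1 - min (α/2) (1/2) < ‖F.comp J‖⁻¹ * (F.comp J) x := by
      have : (‖F.comp J‖⁻¹ • F.comp J) x = ‖F.comp J‖⁻¹ * (F.comp J) x := rfl
      rw [← this]; exact hx2
    have hfx : ‖F.comp J‖ * (1 - min (α/2) (1/2)) < (F.comp J) x := by
      have h5 := mul_lt_mul_of_pos_left hx2' hfpos
      rw [show ‖F.comp J‖ * (‖F.comp J‖⁻¹ * (F.comp J) x) = (F.comp J) x from by
        field_simp] at h5
      exact h5
    have hval2 : 1 - α < F (J (‖u‖ • x) + r) := by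
      have e : F (J (‖u‖ • x) + r) = ‖u‖ * (F.comp J) x + F r := by
        rw [map_add]
        congr 1
        rw [← fapp, map_smul, smul_eq_mul]
      rw [e]
      have k1 : ‖u‖ * (‖F.comp J‖ * (1 - min (α/2) (1/2))) < ‖u‖ * (F.comp J) x :=
        mul_lt_mul_of_pos_left hfx htpos
      have k2 : (F.comp J) u * (1 - min (α/2) (1/2))
          ≤ ‖u‖ * ‖F.comp J‖ * (1 - min (α/2) (1/2)) := by
        apply mul_le_mul_of_nonneg_right _ (by linarith)
        calc (F.comp J) u ≤ ‖F.comp J‖ * ‖u‖ := hfu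
          _ = ‖u‖ * ‖F.comp J‖ := mul_comm _ _
      have k3 : (F.comp J) u - min (α/2) (1/2) ≤ (F.comp J) u * (1 - min (α/2) (1/2)) := by
        nlinarith
      have k4 : (F.comp J) u = F (J u) := fapp u
      nlinarith
    exact ⟨mem_closedBall_zero_iff.mpr (hmono x hx1), hval2⟩
  have hdd : ∀ x ∈ ballSlice E (‖F.comp J‖⁻¹ • F.comp J) (min (α/2) (1/2)),
      ∀ x' ∈ ballSlice E (‖F.comp J‖⁻¹ • F.comp J) (min (α/2) (1/2)),
      dist x x' ≤ diam (ballSlice Z F α) / ‖u‖ := by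
    intro x hx x' hx'
    have hzz : dist (J (‖u‖ • x) + r) (J (‖u‖ • x') + r) = ‖u‖ * dist x x' := by
      rw [dist_eq_norm, dist_eq_norm]
      have e : (J (‖u‖ • x) + r) - (J (‖u‖ • x') + r) = J (‖u‖ • (x - x')) := by
        rw [smul_sub, map_sub]; abel
      rw [e, hJ, norm_smul, Real.norm_eq_abs, abs_of_pos htpos]
    have hle : ‖u‖ * dist x x' ≤ diam (ballSlice Z F α) := by
      rw [← hzz]
      exact dist_le_diam_of_mem hZb (hmem x hx) (hmem x' hx')
    rw [le_div_iff₀ htpos, mul_comm]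
    exact hle
  have hd1 := diam_le_of_forall_dist_le (div_nonneg diam_nonneg htpos.le) hdd
  calc diam (ballSlice E (‖F.comp J‖⁻¹ • F.comp J) (min (α/2) (1/2)))
      ≤ diam (ballSlice Z F α) / ‖u‖ := hd1
    _ ≤ diam (ballSlice Z F α) / (3/8) :=
        div_le_div_of_nonneg_left diam_nonneg (by norm_num) ht.le
    _ = (8/3) * diam (ballSlice Z F α) := by ring

lemma bdp_hard {X Y : Type*} [NormedAddCommGroup X] [NormedSpace ℝ X]
    [NormedAddCommGroup Y] [NormedSpace ℝ Y] (p : ℝ≥0∞) [Fact (1 ≤ p)]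
    (hp : p ≠ ∞) (hZ : BDP (WithLp p (X × Y))) :
    ∀ ε > (0:ℝ),
      (∃ f : X →L[ℝ] ℝ, ‖f‖ = 1 ∧ ∃ α > (0:ℝ), diam (ballSlice X f α) < ε) ∨
      (∃ g : Y →L[ℝ] ℝ, ‖g‖ = 1 ∧ ∃ α > (0:ℝ), diam (ballSlice Y g α) < ε) := by
  intro ε₀ hε₀
  have hε : (0:ℝ) < min (ε₀/4) (1/4) := lt_min (by linarith) (by norm_num)
  obtain ⟨F, hF, α₁, hα₁, hdiam₁⟩ := hZ (min (ε₀/4) (1/4)) hε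
  have hFle : ‖F‖ ≤ 1 := le_of_eq hF
  have hα : 0 < min α₁ (1/2) := lt_min hα₁ (by norm_num)
  have hα12 : min α₁ (1/2) ≤ 1/2 := min_le_right _ _
  have hsub : ballSlice (WithLp p (X × Y)) F (min α₁ (1/2))
      ⊆ ballSlice (WithLp p (X × Y)) F α₁ := by
    rintro z ⟨h1, h2⟩
    exact ⟨h1, lt_of_le_of_lt (by linarith [min_le_left α₁ (1/2)]) h2⟩
  have hZb : Bornology.IsBounded (ballSlice (WithLp p (X × Y)) F α₁) :=
    (isBounded_closedBall).subset (fun z hz => hz.1)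
  have hZb' : Bornology.IsBounded (ballSlice (WithLp p (X × Y)) F (min α₁ (1/2))) :=
    hZb.subset hsub
  have hdiam : diam (ballSlice (WithLp p (X × Y)) F (min α₁ (1/2))) < min (ε₀/4) (1/4) :=
    lt_of_le_of_lt (diam_mono hsub hZb) hdiam₁
  obtain ⟨zb, hzb1, hzb2⟩ := exists_slice_elt F hF (c := 1 - min α₁ (1/2)/2)
    (by linarith) (by linarith)
  have hdec : F (inlZ p zb.fst) + F (inrZ p zb.snd) = F zb := by
    rw [← map_add, z_decomp]
  have hfinal : diam (ballSlice (WithLp p (X × Y)) F (min α₁ (1/2))) * (8/3) < ε₀ := by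
    have h1 : diam (ballSlice (WithLp p (X × Y)) F (min α₁ (1/2))) * (8/3)
        < min (ε₀/4) (1/4) * (8/3) := by
      apply mul_lt_mul_of_pos_right hdiam (by norm_num)
    have h2 : min (ε₀/4) (1/4) * (8/3) ≤ (ε₀/4) * (8/3) := by
      apply mul_le_mul_of_nonneg_right (min_le_left _ _) (by norm_num)
    linarith
  rcases le_total (F (inrZ p zb.snd)) (F (inlZ p zb.fst)) with hcase | hcase
  · left
    obtain ⟨h, hh1, β, hβ, hd⟩ := slice_case F hFle hα hα12 hZb' (inlZ p) (inlZ_norm p)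
      zb.fst (inrZ p zb.snd) ((fst_norm_le p hp zb).trans hzb1)
      (by rw [hdec]; exact hzb2) hcase
      (fun x hx => mono_left p hp zb hzb1 x hx)
    refine ⟨h, hh1, β, hβ, lt_of_le_of_lt hd ?_⟩
    linarith
  · right
    obtain ⟨h, hh1, β, hβ, hd⟩ := slice_case F hFle hα hα12 hZb' (inrZ p) (inrZ_norm p)
      zb.snd (inlZ p zb.fst) ((snd_norm_le p hp zb).trans hzb1)
      (by rw [add_comm, hdec]; exact hzb2) hcase
      (fun y hy => mono_right p hp zb hzb1 y hy)
    refine ⟨h, hh1, β, hβ, lt_of_le_of_lt hd ?_⟩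
    linarith

/-- For `Z = X ⊕_p Y` (`1 ≤ p < ∞`), `Z` has `BDP` iff `X` or `Y` has `BDP`. -/
theorem statement4 (X Y : Type*) [NormedAddCommGroup X] [NormedSpace ℝ X] [CompleteSpace X]
    [NormedAddCommGroup Y] [NormedSpace ℝ Y] [CompleteSpace Y]
    (p : ℝ≥0∞) [Fact (1 ≤ p)] (hp : p ≠ ∞) :
    BDP (WithLp p (X × Y)) ↔ BDP X ∨ BDP Y := by
  constructor
  · intro hZ
    by_cases hX : BDP X
    · exact Or.inl hX
    · right
      have hX' : ∃ ε₁ > (0:ℝ),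
          ¬ (∃ f : X →L[ℝ] ℝ, ‖f‖ = 1 ∧ ∃ α > (0:ℝ), diam (ballSlice X f α) < ε₁) := by
        by_contra hc
        push_neg at hc
        exact hX (fun ε hε => by
          obtain ⟨f, h1, α, h2, h3⟩ := hc ε hε
          exact ⟨f, h1, α, h2, h3⟩)
      obtain ⟨ε₁, hε₁, hnX⟩ := hX'
      intro ε hε
      rcases bdp_hard p hp hZ (min ε ε₁) (lt_min hε hε₁) with h | h
      · exact absurd (by
          obtain ⟨f, h1, α, h2, h3⟩ := h
          exact ⟨f, h1, α, h2, lt_of_lt_of_le h3 (min_le_right _ _)⟩) hnX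
      · obtain ⟨g, h1, α, h2, h3⟩ := h
        exact ⟨g, h1, α, h2, lt_of_lt_of_le h3 (min_le_left _ _)⟩
  · rintro (hX | hY)
    · exact bdp_left p hp hX
    · exact bdp_right p hp hY
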